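/- Let C ⊆ Ω be closed convex subsets of ℝ^d with nonempty interiors. Suppose f : Ω → ℝ is convex on C and differentiable on int(Ω); φ : Ω → ℝ is of Legendre type, continuous on Ω, and α-strongly convex with respect to a norm ‖·‖ on C for some α > 0; f is L-smooth with respect to ‖·‖ on C ∩ int(Ω) for some L > 0; and there exists G > 0 such that D_φ(z, θ_0) ≤ (G/2)‖θ_0 − z‖² for all z ∈ C (which holds in particular if φ is G-smooth with respect to ‖·‖ on C). Let (θ_t) be mirror descent iterates θ_{t+1} = argmin_{θ ∈ C} ( η⟨∇f(θ_t), θ⟩ + D_φ(θ, θ_t) ) initialized at θ_0 ∈ C ∩ int(Ω) with constant step size η ∈ (0, α/L]. Fix an integer T ≥ 1 and set λ_T := 1/(ηT). Then for every z ∈ C: inf_{w ∈ C} ( f(w) + (α/4)λ_T‖θ_0 − w‖² ) ≤ f(θ_T) + (α/4)λ_T‖θ_0 − θ_T‖² ≤ f(z) + ((G+α)/2)λ_T‖θ_0 − z‖². -/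

import Mathlib

open Finset Filter
open scoped RealInnerProductSpace

theorem md_N_lower_bound {d : ℕ} (N : EuclideanSpace ℝ (Fin d) → ℝ)
    (hN_pos : ∀ x, x ≠ 0 → 0 < N x) (hN_zero : N 0 = 0)
    (hN_add : ∀ x y, N (x + y) ≤ N x + N y)
    (hN_smul : ∀ (c : ℝ) x, N (c • x) = |c| * N x) :
    ∃ c > 0, ∀ x, c * ‖x‖ ≤ N x := by
  classical
  have hneg : ∀ x, N (-x) = N x := fun x => by simpa using hN_smul (-1) x
  have hnonneg : ∀ x, 0 ≤ N x := by
    intro x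
    have h := hN_add x (-x)
    rw [add_neg_cancel, hN_zero, hneg] at h
    linarith
  obtain ⟨M, hM0, hM⟩ : ∃ M ≥ 0, ∀ x, N x ≤ M * ‖x‖ := by
    refine ⟨∑ i, N (EuclideanSpace.single i (1:ℝ)),
      Finset.sum_nonneg fun i _ => hnonneg _, ?_⟩
    intro x
    have hsum : ∀ (s : Finset (Fin d)) (v : Fin d → EuclideanSpace ℝ (Fin d)),
        N (∑ i ∈ s, v i) ≤ ∑ i ∈ s, N (v i) := by
      intro s
      induction s using Finset.cons_induction with
      | empty => intro v; simp [hN_zero]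
      | cons a s ha ih =>
        intro v
        rw [Finset.sum_cons, Finset.sum_cons]
        exact le_trans (hN_add _ _) (by linarith [ih v])
    have habs : ∀ i, |x i| ≤ ‖x‖ := by
      intro i
      rw [EuclideanSpace.norm_eq]
      have h1 : ‖x i‖ ^ 2 ≤ ∑ j, ‖x j‖ ^ 2 :=
        Finset.single_le_sum (fun j _ => sq_nonneg ‖x j‖) (Finset.mem_univ i)
      calc |x i| = Real.sqrt (‖x i‖ ^ 2) := by
            rw [Real.sqrt_sq_eq_abs]; simp
        _ ≤ Real.sqrt (∑ j, ‖x j‖ ^ 2) := Real.sqrt_le_sqrt h1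
    have hx : x = ∑ i, x i • EuclideanSpace.single i (1:ℝ) := by
      have h := (EuclideanSpace.basisFun (Fin d) ℝ).sum_repr x
      simpa [EuclideanSpace.basisFun_apply, EuclideanSpace.basisFun_repr] using h.symm
    calc N x = N (∑ i, x i • EuclideanSpace.single i (1:ℝ)) := by rw [← hx]
      _ ≤ ∑ i, N (x i • EuclideanSpace.single i (1:ℝ)) := hsum _ _
      _ = ∑ i, |x i| * N (EuclideanSpace.single i (1:ℝ)) := by simp [hN_smul]
      _ ≤ ∑ i, ‖x‖ * N (EuclideanSpace.single i (1:ℝ)) :=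
          Finset.sum_le_sum fun i _ =>
            mul_le_mul_of_nonneg_right (habs i) (hnonneg _)
      _ = (∑ i, N (EuclideanSpace.single i (1:ℝ))) * ‖x‖ := by
          rw [← Finset.mul_sum, mul_comm]
  have hNcont : Continuous N := by
    have hd : ∀ x y, dist (N x) (N y) ≤ M * dist x y := by
      intro x y
      rw [Real.dist_eq, dist_eq_norm]
      have h1 : N x - N y ≤ N (x - y) := by
        have h := hN_add (x - y) y
        rw [sub_add_cancel] at h
        linarith
      have h2 : N y - N x ≤ N (x - y) := by
        have h := hN_add (y - x) x
        rw [sub_add_cancel] at h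
        have h3 : N (y - x) = N (x - y) := by
          rw [show y - x = -(x - y) by abel, hneg]
        linarith
      have h4 := hM (x - y)
      rw [abs_le]
      constructor <;> linarith
    exact (LipschitzWith.of_dist_le_mul (K := ⟨M, hM0⟩) (by exact_mod_cast hd)).continuous
  by_cases hex : ∃ x : EuclideanSpace ℝ (Fin d), x ≠ 0
  · obtain ⟨x₁, hx₁⟩ := hex
    have hsph : (Metric.sphere (0 : EuclideanSpace ℝ (Fin d)) 1).Nonempty := by
      refine ⟨‖x₁‖⁻¹ • x₁, ?_⟩
      have h0 : ‖x₁‖ ≠ 0 := norm_ne_zero_iff.mpr hx₁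
      rw [mem_sphere_zero_iff_norm, norm_smul, norm_inv, norm_norm,
        inv_mul_cancel₀ h0]
    obtain ⟨x₀, hx₀S, hmin⟩ :=
      (isCompact_sphere (0 : EuclideanSpace ℝ (Fin d)) 1).exists_isMinOn hsph
        hNcont.continuousOn
    have hx₀ : ‖x₀‖ = 1 := mem_sphere_zero_iff_norm.mp hx₀S
    have hx₀ne : x₀ ≠ 0 := by
      intro h; rw [h] at hx₀; simp at hx₀
    refine ⟨N x₀, hN_pos _ hx₀ne, ?_⟩
    intro x
    by_cases hx : x = 0
    · simp [hx, hN_zero]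
    · have hxn : (0:ℝ) < ‖x‖ := norm_pos_iff.mpr hx
      have hu : ‖x‖⁻¹ • x ∈ Metric.sphere (0 : EuclideanSpace ℝ (Fin d)) 1 := by
        rw [mem_sphere_zero_iff_norm, norm_smul, norm_inv, norm_norm,
          inv_mul_cancel₀ hxn.ne']
      have hle := isMinOn_iff.mp hmin _ hu
      rw [hN_smul, abs_of_nonneg (inv_nonneg.mpr hxn.le)] at hle
      have hc1 : ‖x‖⁻¹ * ‖x‖ = 1 := inv_mul_cancel₀ hxn.ne'
      nlinarith [hnonneg x]
  · push_neg at hex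
    refine ⟨1, one_pos, fun x => ?_⟩
    rw [hex x]
    simp [hN_zero]

theorem md_convex_grad {d : ℕ} {C : Set (EuclideanSpace ℝ (Fin d))}
    (hCconv : Convex ℝ C) {f : EuclideanSpace ℝ (Fin d) → ℝ}
    (hf_conv : ConvexOn ℝ C f) {x w : EuclideanSpace ℝ (Fin d)}
    (hx : x ∈ C) (hw : w ∈ C) (hdx : DifferentiableAt ℝ f x) :
    f x + ⟪gradient f x, w - x⟫ ≤ f w := by
  set v := w - x with hv
  set g : ℝ → ℝ := fun s => f (x + s • v) with hg
  have hmem : ∀ s ∈ Set.Icc (0:ℝ) 1, x + s • v ∈ C := fun s hs =>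
    hCconv.add_smul_sub_mem hx hw hs
  have hgc : ConvexOn ℝ (Set.Icc (0:ℝ) 1) g := by
    constructor
    · exact convex_Icc 0 1
    · intro a ha b hb la mu hla hmu hs
      have key : x + (la * a + mu * b) • v = la • (x + a • v) + mu • (x + b • v) := by
        have h1 : la • (x + a • v) + mu • (x + b • v)
            = (la + mu) • x + (la * a + mu * b) • v := by module
        rw [h1, hs, one_smul]
      simp only [smul_eq_mul, hg]
      rw [key]
      exact hf_conv.2 (hmem a ha) (hmem b hb) hla hmu hs
  have hc : HasDerivAt (fun s : ℝ => x + s • v) v 0 := by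
    simpa using ((hasDerivAt_id (0:ℝ)).smul_const v).const_add x
  have hgd : HasDerivAt g ⟪gradient f x, v⟫ 0 := by
    have hF := hdx.hasGradientAt.hasFDerivAt
    have h0 : x = x + (0:ℝ) • v := by simp
    rw [h0] at hF
    have hcomp := hF.comp_hasDerivAt 0 hc
    exact hcomp.congr_deriv (by simp [InnerProductSpace.toDual_apply_apply])
  have hslope := hgc.le_slope_of_hasDerivAt (Set.left_mem_Icc.mpr zero_le_one)
    (Set.right_mem_Icc.mpr zero_le_one) zero_lt_one hgd
  rw [slope_def_field] at hslope
  have hg1 : g 1 = f w := by simp [hg, hv]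
  have hg0 : g 0 = f x := by simp [hg]
  rw [hg1, hg0] at hslope
  have : ⟪gradient f x, v⟫ ≤ f w - f x := by
    simpa using hslope
  linarith

theorem md_descent {d : ℕ} {f : EuclideanSpace ℝ (Fin d) → ℝ}
    {N : EuclideanSpace ℝ (Fin d) → ℝ} {L : ℝ} {a b : EuclideanSpace ℝ (Fin d)}
    (hdiff : ∀ s ∈ Set.Icc (0:ℝ) 1, DifferentiableAt ℝ f (a + s • (b - a)))
    (hsm : ∀ s ∈ Set.Icc (0:ℝ) 1,
      ⟪gradient f (a + s • (b - a)) - gradient f a, b - a⟫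
        ≤ L * (s * N (b - a)) * N (b - a)) :
    f b ≤ f a + ⟪gradient f a, b - a⟫ + L / 2 * N (b - a) ^ 2 := by
  set v := b - a with hv
  set g : ℝ → ℝ := fun s => f (a + s • v) with hg
  have hc : ∀ s : ℝ, HasDerivAt (fun s : ℝ => a + s • v) v s := fun s => by
    simpa using ((hasDerivAt_id s).smul_const v).const_add a
  have hgd : ∀ s ∈ Set.Icc (0:ℝ) 1,
      HasDerivAt g ⟪gradient f (a + s • v), v⟫ s := by
    intro s hs
    have hF := (hdiff s hs).hasGradientAt.hasFDerivAt
    have hcomp := hF.comp_hasDerivAt s (hc s)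
    exact hcomp.congr_deriv (by simp [InnerProductSpace.toDual_apply_apply])
  set c0 : ℝ := ⟪gradient f a, v⟫ with hc0
  set ψ : ℝ → ℝ := fun s => f a + s * c0 + L / 2 * s ^ 2 * N v ^ 2 - g s with hψ
  have hψd : ∀ s ∈ Set.Icc (0:ℝ) 1,
      HasDerivAt ψ (c0 + L * s * N v ^ 2 - ⟪gradient f (a + s • v), v⟫) s := by
    intro s hs
    have h1 : HasDerivAt (fun s : ℝ => s * c0) c0 s := by
      simpa using (hasDerivAt_id s).mul_const c0
    have h2 : HasDerivAt (fun s : ℝ => L / 2 * s ^ 2 * N v ^ 2)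
        (L * s * N v ^ 2) s := by
      have h3 := ((hasDerivAt_pow 2 s).const_mul (L / 2)).mul_const (N v ^ 2)
      exact h3.congr_deriv (by ring)
    have h4 := ((h1.const_add (f a)).add h2).sub (hgd s hs)
    exact h4
  have hcont : ContinuousOn ψ (Set.Icc 0 1) := fun s hs =>
    ((hψd s hs).continuousAt).continuousWithinAt
  have hmono : MonotoneOn ψ (Set.Icc 0 1) := by
    apply monotoneOn_of_deriv_nonneg (convex_Icc 0 1) hcont
    · intro s hs
      rw [interior_Icc] at hs
      exact ((hψd s (Set.mem_Icc_of_Ioo hs)).differentiableAt).differentiableWithinAt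
    · intro s hs
      rw [interior_Icc] at hs
      have hs' : s ∈ Set.Icc (0:ℝ) 1 := Set.mem_Icc_of_Ioo hs
      rw [(hψd s hs').deriv]
      have hsmm := hsm s hs'
      rw [inner_sub_left] at hsmm
      have hce : c0 = ⟪gradient f a, v⟫ := hc0
      nlinarith [hsmm]
  have h01 := hmono (Set.left_mem_Icc.mpr zero_le_one)
    (Set.right_mem_Icc.mpr zero_le_one) zero_le_one
  have hψ0 : ψ 0 = 0 := by simp [hψ, hg]
  have hψ1 : ψ 1 = f a + c0 + L / 2 * N v ^ 2 - f b := by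
    simp [hψ, hg, hv]
  rw [hψ0, hψ1] at h01
  rw [hc0] at h01
  linarith

set_option maxHeartbeats 1000000 in
/-- **Training envelope for mirror descent.**
Under the mirror-descent assumptions (`C ⊆ Om` closed convex with nonempty interiors, `f`
convex on `C` and differentiable on `int Om`, `φ` of Legendre type, continuous on `Om` and
`α`-strongly convex w.r.t. a norm `N` on `C`, `f` `L`-smooth w.r.t. `N` on `C ∩ int Om`),
if moreover `D_φ(z, θ 0) ≤ (G/2) N(θ 0 - z)²` for all `z ∈ C` (as holds when `φ` is
`G`-smooth w.r.t. `N` on `C`), then for mirror descent iterates with constant step size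
`η ∈ (0, α/L]`, `T ≥ 1` and `λ_T := 1/(ηT)`, for every `z ∈ C`:
`inf_{w ∈ C} (f w + (α/4) λ_T N(θ0 - w)²) ≤ f (θ T) + (α/4) λ_T N(θ0 - θT)²
  ≤ f z + ((G+α)/2) λ_T N(θ0 - z)²`. -/
theorem md_training_envelope {d : ℕ}
    (C Om : Set (EuclideanSpace ℝ (Fin d)))
    (hCOm : C ⊆ Om) (hCclosed : IsClosed C) (hCconv : Convex ℝ C)
    (hOmclosed : IsClosed Om) (hOmconv : Convex ℝ Om)
    (hCint : (interior C).Nonempty) (hOmint : (interior Om).Nonempty)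
    (f φ : EuclideanSpace ℝ (Fin d) → ℝ)
    (hf_conv : ConvexOn ℝ C f)
    (hf_diff : ∀ x ∈ interior Om, DifferentiableAt ℝ f x)
    (N : EuclideanSpace ℝ (Fin d) → ℝ)
    (hN_pos : ∀ x, x ≠ 0 → 0 < N x) (hN_zero : N 0 = 0)
    (hN_add : ∀ x y, N (x + y) ≤ N x + N y)
    (hN_smul : ∀ (c : ℝ) x, N (c • x) = |c| * N x)
    (hφ_cont : ContinuousOn φ Om)
    (hφ_conv : ConvexOn ℝ Om φ)
    (hφ_diff : ∀ x ∈ interior Om, DifferentiableAt ℝ φ x)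
    (hφ_ess_smooth : ∀ (x : ℕ → EuclideanSpace ℝ (Fin d)) (y : EuclideanSpace ℝ (Fin d)),
      (∀ k, x k ∈ interior Om) → y ∈ frontier Om → Tendsto x atTop (nhds y) →
        Tendsto (fun k => ‖gradient φ (x k)‖) atTop atTop)
    (hφ_ess_strict : ∀ s ⊆ {x ∈ Om | ∃ g : EuclideanSpace ℝ (Fin d),
        ∀ y ∈ Om, φ x + ⟪g, y - x⟫ ≤ φ y}, Convex ℝ s → StrictConvexOn ℝ s φ)
    (L α : ℝ) (hL : 0 < L) (hα : 0 < α)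
    (hf_smooth : ∀ x ∈ C ∩ interior Om, ∀ y ∈ C ∩ interior Om,
      ∀ u : EuclideanSpace ℝ (Fin d),
        ⟪gradient f x - gradient f y, u⟫ ≤ L * N (x - y) * N u)
    (hφ_strong : ∀ x ∈ C ∩ interior Om, ∀ y ∈ C,
      φ x + ⟪gradient φ x, y - x⟫ + α / 2 * N (y - x) ^ 2 ≤ φ y)
    (D : EuclideanSpace ℝ (Fin d) → EuclideanSpace ℝ (Fin d) → ℝ)
    (hD : ∀ u v, D u v = φ u - φ v - ⟪gradient φ v, u - v⟫)
    (η : ℝ) (hη : 0 < η ∧ η ≤ α / L)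
    (θ : ℕ → EuclideanSpace ℝ (Fin d))
    (hθmem : ∀ t, θ t ∈ C ∩ interior Om)
    (hupd : ∀ t, ∀ w ∈ C,
      η * ⟪gradient f (θ t), θ (t + 1)⟫ + D (θ (t + 1)) (θ t) ≤
        η * ⟪gradient f (θ t), w⟫ + D w (θ t))
    -- the `G`-bound on the Bregman divergence from the initialization
    (G : ℝ) (hG : 0 < G)
    (hGbound : ∀ z ∈ C, D z (θ 0) ≤ G / 2 * N (θ 0 - z) ^ 2)
    (T : ℕ) (hT : 1 ≤ T) (z : EuclideanSpace ℝ (Fin d)) (hz : z ∈ C) :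
    (⨅ w : C, (f w + α / 4 * (1 / (η * T)) * N (θ 0 - w) ^ 2)) ≤
        f (θ T) + α / 4 * (1 / (η * T)) * N (θ 0 - θ T) ^ 2 ∧
      f (θ T) + α / 4 * (1 / (η * T)) * N (θ 0 - θ T) ^ 2 ≤
        f z + (G + α) / 2 * (1 / (η * T)) * N (θ 0 - z) ^ 2 := by
  obtain ⟨hη0, hηL⟩ := hη
  have hneg : ∀ x, N (-x) = N x := fun x => by simpa using hN_smul (-1) x
  have hnonneg : ∀ x, 0 ≤ N x := by
    intro x
    have h := hN_add x (-x)
    rw [add_neg_cancel, hN_zero, hneg] at h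
    linarith
  have hT1 : (1:ℝ) ≤ (T:ℝ) := by exact_mod_cast hT
  have hTpos : (0:ℝ) < (T:ℝ) := by linarith
  have hP : (0:ℝ) < η * T := mul_pos hη0 hTpos
  have hintconv : Convex ℝ (interior Om) := hOmconv.interior
  have hDstrong : ∀ x ∈ C ∩ interior Om, ∀ y ∈ C,
      α / 2 * N (y - x) ^ 2 ≤ D y x := by
    intro x hx y hy
    rw [hD]
    have h := hφ_strong x hx y hy
    linarith
  have hDzero : ∀ x, D x x = 0 := fun x => by rw [hD]; simp
  -- key per-step inequality
  have hkey : ∀ t, ∀ w ∈ C,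
      η * (f (θ (t + 1)) - f w) ≤ D w (θ t) - D w (θ (t + 1)) := by
    intro t w hw
    set a := θ t with hadef
    set b := θ (t + 1) with hbdef
    have ha := hθmem t
    have hb := hθmem (t + 1)
    -- convexity of f
    have hconv2 : f a + ⟪gradient f a, w - a⟫ ≤ f w :=
      md_convex_grad hCconv hf_conv ha.1 hw (hf_diff a ha.2)
    -- descent lemma
    have hdesc : f b ≤ f a + ⟪gradient f a, b - a⟫ + L / 2 * N (b - a) ^ 2 := by
      apply md_descent
      · intro s hs
        exact hf_diff _ (hintconv.add_smul_sub_mem ha.2 hb.2 hs)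
      · intro s hs
        have hmem : a + s • (b - a) ∈ C ∩ interior Om :=
          ⟨hCconv.add_smul_sub_mem ha.1 hb.1 hs,
           hintconv.add_smul_sub_mem ha.2 hb.2 hs⟩
        have hsm := hf_smooth _ hmem _ ha (b - a)
        have he : a + s • (b - a) - a = s • (b - a) := by
          rw [add_sub_cancel_left]
        rw [he, hN_smul, abs_of_nonneg hs.1] at hsm
        exact hsm
    -- first-order optimality
    have hfo : 0 ≤ η * ⟪gradient f a, w - b⟫ +
        ⟪gradient φ b - gradient φ a, w - b⟫ := by
      set F : EuclideanSpace ℝ (Fin d) → ℝ :=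
        fun x => η * ⟪gradient f a, x⟫ + φ x - ⟪gradient φ a, x⟫ with hF
      have hFmin : IsMinOn F C b := by
        rw [isMinOn_iff]
        intro u hu
        have hup := hupd t u hu
        rw [hD, hD] at hup
        simp only [inner_sub_right] at hup
        simp only [hF]
        linarith
      have h1 : HasFDerivAt (fun x : EuclideanSpace ℝ (Fin d) => η * ⟪gradient f a, x⟫)
          (η • ((InnerProductSpace.toDual ℝ (EuclideanSpace ℝ (Fin d))) (gradient f a)
            : EuclideanSpace ℝ (Fin d) →L[ℝ] ℝ)) b := by
        have hlin := ((InnerProductSpace.toDual ℝ (EuclideanSpace ℝ (Fin d)))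
          (gradient f a) : EuclideanSpace ℝ (Fin d) →L[ℝ] ℝ).hasFDerivAt (x := b)
        have := hlin.const_mul η
        simpa [InnerProductSpace.toDual_apply_apply] using this
      have h2 : HasFDerivAt φ
          ((InnerProductSpace.toDual ℝ (EuclideanSpace ℝ (Fin d))) (gradient φ b)
            : EuclideanSpace ℝ (Fin d) →L[ℝ] ℝ) b :=
        (hφ_diff b hb.2).hasGradientAt.hasFDerivAt
      have h3 : HasFDerivAt (fun x : EuclideanSpace ℝ (Fin d) => ⟪gradient φ a, x⟫)
          ((InnerProductSpace.toDual ℝ (EuclideanSpace ℝ (Fin d))) (gradient φ a)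
            : EuclideanSpace ℝ (Fin d) →L[ℝ] ℝ) b := by
        have hlin := ((InnerProductSpace.toDual ℝ (EuclideanSpace ℝ (Fin d)))
          (gradient φ a) : EuclideanSpace ℝ (Fin d) →L[ℝ] ℝ).hasFDerivAt (x := b)
        simpa [InnerProductSpace.toDual_apply_apply] using hlin
      have hΦ : HasFDerivAt F
          (η • ((InnerProductSpace.toDual ℝ (EuclideanSpace ℝ (Fin d))) (gradient f a)
            : EuclideanSpace ℝ (Fin d) →L[ℝ] ℝ)
          + ((InnerProductSpace.toDual ℝ (EuclideanSpace ℝ (Fin d))) (gradient φ b)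
            : EuclideanSpace ℝ (Fin d) →L[ℝ] ℝ)
          - ((InnerProductSpace.toDual ℝ (EuclideanSpace ℝ (Fin d))) (gradient φ a)
            : EuclideanSpace ℝ (Fin d) →L[ℝ] ℝ)) b := (h1.add h2).sub h3
      have hcone : w - b ∈ posTangentConeAt C b :=
        sub_mem_posTangentConeAt_of_segment_subset (hCconv.segment_subset hb.1 hw)
      have hval := hFmin.localize.hasFDerivWithinAt_nonneg hΦ.hasFDerivWithinAt hcone
      simp only [ContinuousLinearMap.sub_apply, ContinuousLinearMap.add_apply,
        ContinuousLinearMap.smul_apply, InnerProductSpace.toDual_apply_apply,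
        smul_eq_mul] at hval
      rw [inner_sub_left]
      linarith
    have hstrong : α / 2 * N (b - a) ^ 2 ≤ D b a := hDstrong a ha b hb.1
    have hηL' : η * L ≤ α := (le_div_iff₀ hL).mp hηL
    have h3pt : D w a - D w b - D b a = ⟪gradient φ b - gradient φ a, w - b⟫ := by
      rw [hD, hD, hD]
      simp only [inner_sub_left, inner_sub_right]
      ring
    rw [inner_sub_right] at hconv2 hdesc
    rw [inner_sub_right] at hfo
    rw [h3pt.symm] at hfo
    have hn2 : (0:ℝ) ≤ N (b - a) ^ 2 := sq_nonneg _
    have hmul : η * (f b - f w) ≤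
        η * ((⟪gradient f a, b⟫ - ⟪gradient f a, w⟫) + L / 2 * N (b - a) ^ 2) := by
      apply mul_le_mul_of_nonneg_left _ hη0.le
      linarith
    have hLa : η * L * N (b - a) ^ 2 ≤ α * N (b - a) ^ 2 :=
      mul_le_mul_of_nonneg_right hηL' hn2
    nlinarith [hmul, hfo, hstrong, hLa]
  -- monotone decrease of f along iterates
  have hmono : ∀ t, f (θ (t + 1)) ≤ f (θ t) := by
    intro t
    have hk := hkey t (θ t) (hθmem t).1
    have h0 := hDzero (θ t)
    have h1 := hDstrong (θ (t + 1)) (hθmem (t + 1)) (θ t) (hθmem t).1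
    nlinarith [sq_nonneg (N (θ t - θ (t + 1))), hη0]
  have hanti : ∀ s t : ℕ, s ≤ t → f (θ t) ≤ f (θ s) := by
    intro s t h
    induction h with
    | refl => exact le_rfl
    | step h ih => exact le_trans (hmono _) ih
  -- telescoping
  have htel : ∀ w ∈ C, (T:ℝ) * (η * (f (θ T) - f w)) ≤ D w (θ 0) - D w (θ T) := by
    intro w hw
    have hsum : ∑ t ∈ Finset.range T, (η * (f (θ (t + 1)) - f w)) ≤
        ∑ t ∈ Finset.range T, (D w (θ t) - D w (θ (t + 1))) :=
      Finset.sum_le_sum fun t _ => hkey t w hw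
    rw [Finset.sum_range_sub' (fun t => D w (θ t))] at hsum
    have hge : ∑ t ∈ Finset.range T, (η * (f (θ T) - f w)) ≤
        ∑ t ∈ Finset.range T, (η * (f (θ (t + 1)) - f w)) := by
      apply Finset.sum_le_sum
      intro t ht
      apply mul_le_mul_of_nonneg_left _ hη0.le
      have := hanti (t + 1) T (Finset.mem_range.mp ht)
      linarith
    rw [Finset.sum_const, Finset.card_range, nsmul_eq_mul] at hge
    linarith
  -- the main (second) bound, for any u ∈ C
  have hmain : ∀ u ∈ C,
      f (θ T) + α / 4 * (1 / (η * T)) * N (θ 0 - θ T) ^ 2 ≤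
        f u + (G + α) / 2 * (1 / (η * T)) * N (θ 0 - u) ^ 2 := by
    intro u hu
    have h1 := htel u hu
    have h2 := hGbound u hu
    have h3 := hDstrong (θ T) (hθmem T) u hu
    have htri : N (θ 0 - θ T) ≤ N (θ 0 - u) + N (u - θ T) := by
      have h := hN_add (θ 0 - u) (u - θ T)
      rw [show θ 0 - u + (u - θ T) = θ 0 - θ T by abel] at h
      exact h
    have hsq : N (θ 0 - θ T) ^ 2 ≤ 2 * N (θ 0 - u) ^ 2 + 2 * N (u - θ T) ^ 2 := by
      nlinarith [hnonneg (θ 0 - u), hnonneg (u - θ T), hnonneg (θ 0 - θ T),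
        sq_nonneg (N (θ 0 - u) - N (u - θ T))]
    have hsq' : α / 4 * N (θ 0 - θ T) ^ 2 ≤
        α / 4 * (2 * N (θ 0 - u) ^ 2 + 2 * N (u - θ T) ^ 2) :=
      mul_le_mul_of_nonneg_left hsq (by positivity)
    have hkey2 : (η * T) * f (θ T) + α / 4 * N (θ 0 - θ T) ^ 2 ≤
        (η * T) * f u + (G + α) / 2 * N (θ 0 - u) ^ 2 := by
      nlinarith [h1, h2, h3, hsq']
    have heq : f u + (G + α) / 2 * (1 / (η * T)) * N (θ 0 - u) ^ 2 -
        (f (θ T) + α / 4 * (1 / (η * T)) * N (θ 0 - θ T) ^ 2) =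
        (1 / (η * T)) * (((η * T) * f u + (G + α) / 2 * N (θ 0 - u) ^ 2) -
          ((η * T) * f (θ T) + α / 4 * N (θ 0 - θ T) ^ 2)) := by
      field_simp
    rw [← sub_nonneg, heq]
    apply mul_nonneg (by positivity)
    linarith
  -- bounded below: the infimum part
  obtain ⟨c, hc0, hc⟩ := md_N_lower_bound N hN_pos hN_zero hN_add hN_smul
  have hθ0 := hθmem 0
  set g0 := gradient f (θ 0) with hg0
  set K : ℝ := ‖g0‖ / c with hK
  set β : ℝ := α / 4 * (1 / (η * T)) with hβdef
  have hβ : 0 < β := by positivity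
  have hKnn : 0 ≤ K := div_nonneg (norm_nonneg _) hc0.le
  have hBdd : BddBelow (Set.range fun w : C =>
      f w + α / 4 * (1 / (η * T)) * N (θ 0 - w) ^ 2) := by
    refine ⟨f (θ 0) - K ^ 2 / (4 * β), ?_⟩
    rintro y ⟨w, rfl⟩
    have hcg := md_convex_grad hCconv hf_conv hθ0.1 w.2 (hf_diff _ hθ0.2)
    have hip : -(‖g0‖ * ‖(w : EuclideanSpace ℝ (Fin d)) - θ 0‖) ≤
        ⟪g0, (w : EuclideanSpace ℝ (Fin d)) - θ 0⟫ := by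
      have habs := abs_real_inner_le_norm g0 ((w : EuclideanSpace ℝ (Fin d)) - θ 0)
      have := neg_abs_le ⟪g0, (w : EuclideanSpace ℝ (Fin d)) - θ 0⟫
      linarith
    set n := N (θ 0 - (w : EuclideanSpace ℝ (Fin d))) with hn
    have hn0 : 0 ≤ n := hnonneg _
    have hnw : ‖(w : EuclideanSpace ℝ (Fin d)) - θ 0‖ ≤ (1 / c) * n := by
      have hcle := hc ((w : EuclideanSpace ℝ (Fin d)) - θ 0)
      have hsymm : N ((w : EuclideanSpace ℝ (Fin d)) - θ 0) = n := by
        rw [hn, show (w : EuclideanSpace ℝ (Fin d)) - θ 0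
          = -(θ 0 - (w : EuclideanSpace ℝ (Fin d))) by abel, hneg]
      rw [hsymm] at hcle
      have h1 : c * (1 / c) = 1 := by field_simp
      nlinarith [norm_nonneg ((w : EuclideanSpace ℝ (Fin d)) - θ 0)]
    have hKn : ‖g0‖ * ‖(w : EuclideanSpace ℝ (Fin d)) - θ 0‖ ≤ K * n := by
      have := mul_le_mul_of_nonneg_left hnw (norm_nonneg g0)
      calc ‖g0‖ * ‖(w : EuclideanSpace ℝ (Fin d)) - θ 0‖
          ≤ ‖g0‖ * ((1 / c) * n) := this
        _ = K * n := by rw [hK]; ring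
    have hβinv : β * (K ^ 2 / (4 * β)) = K ^ 2 / 4 := by field_simp
    have hgoal : f (θ 0) - K ^ 2 / (4 * β) ≤
        f (w : EuclideanSpace ℝ (Fin d)) + β * n ^ 2 := by
      nlinarith [sq_nonneg (2 * β * n - K), hβ, hcg, hip, hKn, hβinv]
    calc f (θ 0) - K ^ 2 / (4 * β) ≤
        f (w : EuclideanSpace ℝ (Fin d)) + β * n ^ 2 := hgoal
      _ = f (w : EuclideanSpace ℝ (Fin d)) +
          α / 4 * (1 / (η * T)) * N (θ 0 - (w : EuclideanSpace ℝ (Fin d))) ^ 2 := by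
          rw [hβdef, hn]
  constructor
  · exact ciInf_le hBdd ⟨θ T, (hθmem T).1⟩
  · exact hmain z hz
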